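/- If U ⊊ { {d, 2d} : d ∈ A } is any proper subfamily (A the set of integers with ternary digits 0,1, d ranging over positive elements of A), then the set of P-positions of the comply-number game defined by U contains a nontrivial three-term arithmetic progression. -/

import Mathlib

/-- P-positions of the comply-number game defined by a family `S` of finite sets of
positive integers. -/
def complyNumP (S : Set (Finset ℕ)) : ℕ → Prop
  | x => ∀ s, s ∈ S → (∀ i ∈ s, i ≤ x) →
      ∃ i, ∃ _ : i ∈ s, ∃ _ : 0 < i, ∃ _ : i ≤ x, ¬ complyNumP S (x - i)
termination_by x => x
decreasing_by all_goals omega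

def InA (n : ℕ) : Prop := ∀ c ∈ Nat.digits 3 n, c ≤ 1

lemma inA_mod {n : ℕ} (h : InA n) : n % 3 ≤ 1 := by
  rcases Nat.eq_zero_or_pos n with rfl | hn
  · simp
  · exact h _ (by rw [Nat.digits_def' (by norm_num) hn]; exact List.mem_cons_self)

lemma inA_div {n : ℕ} (h : InA n) : InA (n / 3) := by
  rcases Nat.eq_zero_or_pos n with rfl | hn
  · simpa using h
  · intro c hc
    exact h _ (by rw [Nat.digits_def' (by norm_num) hn]; exact List.mem_cons_of_mem _ hc)

lemma inA_build {m r : ℕ} (hr : r ≤ 1) (hm : InA m) : InA (3 * m + r) := by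
  rcases Nat.eq_zero_or_pos (3 * m + r) with h0 | hp
  · intro c hc; rw [h0] at hc; simp at hc
  · intro c hc
    rw [Nat.digits_def' (by norm_num) hp] at hc
    have h1 : (3 * m + r) % 3 = r := by omega
    have h2 : (3 * m + r) / 3 = m := by omega
    rw [h1, h2] at hc
    rcases List.mem_cons.1 hc with rfl | hc
    · exact hr
    · exact hm _ hc

lemma noAP (b : ℕ) : ∀ a c, InA a → InA b → InA c → a + c = 2 * b → a = c := by
  induction b using Nat.strong_induction_on with
  | _ b ih =>
    intro a c ha hb hc h
    rcases Nat.eq_zero_or_pos b with rfl | hb0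
    · omega
    · have h1 := inA_mod ha
      have h2 := inA_mod hb
      have h3 := inA_mod hc
      have key : a % 3 = c % 3 ∧ a / 3 + c / 3 = 2 * (b / 3) := by omega
      have := ih (b / 3) (Nat.div_lt_self hb0 (by norm_num)) (a / 3) (c / 3)
        (inA_div ha) (inA_div hb) (inA_div hc) key.2
      omega

lemma keylemma (c : ℕ) : ∀ p d q, InA p → InA d → InA c → InA q →
    p + 2 * d = 2 * c → p + d = q → p = 0 := by
  induction c using Nat.strong_induction_on with
  | _ c ih =>
    intro p d q hp hd hc hq h1 h2
    rcases Nat.eq_zero_or_pos c with rfl | hc0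
    · omega
    · have m1 := inA_mod hp
      have m2 := inA_mod hd
      have m3 := inA_mod hc
      have m4 := inA_mod hq
      have hc1 : ¬ (p % 3 = 1 ∧ d % 3 = 1) := by omega
      have key : p % 3 = 0 ∧ p / 3 + 2 * (d / 3) = 2 * (c / 3) ∧ p / 3 + d / 3 = q / 3 := by
        omega
      have := ih (c / 3) (Nat.div_lt_self hc0 (by norm_num)) (p / 3) (d / 3) (q / 3)
        (inA_div hp) (inA_div hd) (inA_div hc) (inA_div hq) key.2.1 key.2.2
      omega

lemma exists_move : ∀ x : ℕ, ∃ d a, x = a + 2 * d ∧ InA d ∧ InA a ∧ InA (a + d) ∧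
    (¬ InA x → 0 < d) := by
  intro x
  induction x using Nat.strong_induction_on with
  | _ x ih =>
    rcases Nat.eq_zero_or_pos x with rfl | hx
    · exact ⟨0, 0, by omega, by intro c hc; simp at hc, by intro c hc; simp at hc,
        by intro c hc; simp at hc, fun h => absurd (by intro c hc; simp at hc) h⟩
    · obtain ⟨d', a', hxe, hd', ha', had', hpos'⟩ := ih (x / 3) (Nat.div_lt_self hx (by norm_num))
      by_cases h2 : x % 3 = 2
      · refine ⟨3 * d' + 1, 3 * a', by omega, inA_build (by norm_num) hd', ?_, ?_, fun _ => by omega⟩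
        · have : (3 * a' : ℕ) = 3 * a' + 0 := by omega
          rw [this]; exact inA_build (by norm_num) ha'
        · have : 3 * a' + (3 * d' + 1) = 3 * (a' + d') + 1 := by ring
          rw [this]; exact inA_build (by norm_num) had'
      · have hr : x % 3 ≤ 1 := by omega
        refine ⟨3 * d', 3 * a' + x % 3, by omega, ?_, inA_build hr ha', ?_, ?_⟩
        · have : (3 * d' : ℕ) = 3 * d' + 0 := by omega
          rw [this]; exact inA_build (by norm_num) hd'
        · have : 3 * a' + x % 3 + 3 * d' = 3 * (a' + d') + x % 3 := by ring
          rw [this]; exact inA_build hr had'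
        · intro hxA
          have : ¬ InA (x / 3) := by
            intro hq
            have := inA_build hr hq
            have he : 3 * (x / 3) + x % 3 = x := by omega
            rw [he] at this
            exact hxA this
          have := hpos' this
          omega

/-- If `U` is a proper subfamily of `T = { {d, 2d} : d ∈ A, d > 0 }` (`A` the set of
integers with ternary digits 0, 1), then the P-positions of the comply-number game on
`U` contain a nontrivial three-term arithmetic progression. -/
theorem proper_restriction_has_threeAP (U : Set (Finset ℕ))
    (hsub : U ⊆ {s : Finset ℕ | ∃ d : ℕ, 0 < d ∧ (∀ c ∈ Nat.digits 3 d, c ≤ 1) ∧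
        s = {d, 2 * d}})
    (hne : U ≠ {s : Finset ℕ | ∃ d : ℕ, 0 < d ∧ (∀ c ∈ Nat.digits 3 d, c ≤ 1) ∧
        s = {d, 2 * d}}) :
    ∃ x d : ℕ, 0 < d ∧ 2 * d ≤ x ∧
      complyNumP U (x - 2 * d) ∧ complyNumP U (x - d) ∧ complyNumP U x := by
  classical
  have hex : ∃ d, 0 < d ∧ InA d ∧ ({d, 2 * d} : Finset ℕ) ∉ U := by
    by_contra h
    push_neg at h
    apply hne
    apply Set.Subset.antisymm hsub
    intro s hs
    obtain ⟨d, hd, hA, rfl⟩ := hs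
    exact h d hd hA
  set d0 := Nat.find hex with hd0def
  obtain ⟨hd0pos, hd0A, hd0U⟩ := Nat.find_spec hex
  have hmem : ∀ d, 0 < d → InA d → d < d0 → ({d, 2 * d} : Finset ℕ) ∈ U := by
    intro d h1 h2 h3
    by_contra hc
    exact Nat.find_min hex h3 ⟨h1, h2, hc⟩
  have char : ∀ x, x < 2 * d0 → (complyNumP U x ↔ InA x) := by
    intro x
    induction x using Nat.strong_induction_on with
    | _ x ih =>
      intro hx
      constructor
      · intro hP
        by_contra hxA
        obtain ⟨d, a, hxe, hdA, haA, hadA, hdpos⟩ := exists_move x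
        have hd : 0 < d := hdpos hxA
        have hU : ({d, 2 * d} : Finset ℕ) ∈ U := hmem d hd hdA (by omega)
        rw [complyNumP] at hP
        obtain ⟨i, hi, hip, hile, hnP⟩ := hP _ hU (by intro i hi; simp at hi; omega)
        simp only [Finset.mem_insert, Finset.mem_singleton] at hi
        rcases hi with h | h
        · rw [h] at hnP
          refine hnP ((ih (x - d) (by omega) (by omega)).2 ?_)
          have he : x - d = a + d := by omega
          rw [he]; exact hadA
        · rw [h] at hnP
          refine hnP ((ih (x - 2 * d) (by omega) (by omega)).2 ?_)
          have he : x - 2 * d = a := by omega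
          rw [he]; exact haA
      · intro hxA
        rw [complyNumP]
        intro s hs hle
        obtain ⟨d, hdpos, hdA, rfl⟩ := hsub hs
        have h2d : 2 * d ≤ x := hle _ (by simp)
        by_cases hb : InA (x - d)
        · refine ⟨2 * d, by simp, by omega, by omega, ?_⟩
          rw [ih (x - 2 * d) (by omega) (by omega)]
          intro hcon
          have := noAP (x - d) (x - 2 * d) x hcon hb hxA (by omega)
          omega
        · exact ⟨d, by simp, hdpos, by omega,
            fun hc => hb ((ih (x - d) (by omega) (by omega)).1 hc)⟩
  have hP0 : complyNumP U 0 := by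
    rw [complyNumP]
    intro s hs hle
    obtain ⟨d, hdpos, _, rfl⟩ := hsub hs
    have := hle d (by simp)
    omega
  have hPd0 : complyNumP U d0 := (char d0 (by omega)).2 hd0A
  have hP2d0 : complyNumP U (2 * d0) := by
    rw [complyNumP]
    intro s hs hle
    obtain ⟨d, hdpos, hdA, rfl⟩ := hsub hs
    have h2d : 2 * d ≤ 2 * d0 := hle _ (by simp)
    have hdne : d ≠ d0 := by rintro rfl; exact hd0U hs
    have hdlt : d < d0 := by omega
    by_cases hb : InA (2 * d0 - d)
    · refine ⟨2 * d, by simp, by omega, by omega, ?_⟩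
      rw [char (2 * d0 - 2 * d) (by omega)]
      intro hcon
      have := keylemma d0 (2 * d0 - 2 * d) d (2 * d0 - d) hcon hdA hd0A hb (by omega) (by omega)
      omega
    · exact ⟨d, by simp, hdpos, by omega,
        fun hc => hb ((char (2 * d0 - d) (by omega)).1 hc)⟩
  refine ⟨2 * d0, d0, hd0pos, le_refl _, ?_, ?_, hP2d0⟩
  · have he : 2 * d0 - 2 * d0 = 0 := by omega
    rw [he]; exact hP0
  · have he : 2 * d0 - d0 = d0 := by omega
    rw [he]; exact hPd0
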